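/- arXiv:2404.11607 — 2 statements merged into one kernel-verified Lean document; each statement's English description precedes it below -/
import Mathlib

section
/- The Subset Selection mechanism is ε-locally differentially private: for every pair of inputs z, z' ∈ Z and every subset S ⊆ Z, the output probabilities satisfy P_z(S) ≤ e^ε · P_{z'}(S). -/
/-- The parameter `d = ⌈s / (e^ε + 1)⌉` of the Subset Selection mechanism. -/
noncomputable def ssD (s : ℕ) (ε : ℝ) : ℕ := ⌈(s : ℝ) / (Real.exp ε + 1)⌉₊

/-- The parameter `p = d e^ε / (d e^ε + s - d)` of the Subset Selection mechanism. -/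
noncomputable def ssp (s : ℕ) (ε : ℝ) : ℝ :=
  (ssD s ε : ℝ) * Real.exp ε / ((ssD s ε : ℝ) * Real.exp ε + (s : ℝ) - (ssD s ε : ℝ))

/-- The probability mass `P_z(S)` of the Subset Selection mechanism with input `z`,
identifying the domain `{1, …, s}` with `Fin s`. -/
noncomputable def ssP (s : ℕ) (ε : ℝ) (z : Fin s) (S : Finset (Fin s)) : ℝ :=
  if S.card = ssD s ε then
    if z ∈ S then ssp s ε / ((s - 1).choose (ssD s ε - 1) : ℝ)
    else (1 - ssp s ε) / ((s - 1).choose (ssD s ε) : ℝ)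
  else 0

lemma ssD_pos (s : ℕ) (hs : 2 ≤ s) (ε : ℝ) : 1 ≤ ssD s ε := by
  have h1 : (0:ℝ) < Real.exp ε + 1 := by positivity
  have h2 : (0:ℝ) < (s:ℝ) / (Real.exp ε + 1) := by
    apply div_pos _ h1
    exact_mod_cast lt_of_lt_of_le (by norm_num) hs
  exact Nat.one_le_iff_ne_zero.mpr (by
    simp [ssD, Nat.ceil_eq_zero, not_le, h2])

lemma ssD_le (s : ℕ) (hs : 2 ≤ s) (ε : ℝ) (hε : 0 < ε) : ssD s ε ≤ s - 1 := by
  have h1 : (1:ℝ) < Real.exp ε := by nlinarith [Real.add_one_le_exp ε]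
  have h2 : (s:ℝ) / (Real.exp ε + 1) ≤ ((s - 1 : ℕ) : ℝ) := by
    have hs' : (2:ℝ) ≤ (s:ℝ) := by exact_mod_cast hs
    have : (s:ℝ) / (Real.exp ε + 1) ≤ (s:ℝ) / 2 := by
      apply div_le_div_of_nonneg_left (by linarith) (by norm_num) (by linarith)
    have h3 : (s:ℝ) / 2 ≤ (s:ℝ) - 1 := by linarith
    have h4 : ((s - 1 : ℕ) : ℝ) = (s:ℝ) - 1 := by
      have : 1 ≤ s := by omega
      push_cast [this]; ring
    linarith
  exact Nat.ceil_le.mpr h2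

/-- The key exact identity: P_in = e^ε · P_out. -/
lemma ssP_key (s : ℕ) (hs : 2 ≤ s) (ε : ℝ) (hε : 0 < ε) :
    ssp s ε / ((s - 1).choose (ssD s ε - 1) : ℝ)
      = Real.exp ε * ((1 - ssp s ε) / ((s - 1).choose (ssD s ε) : ℝ)) := by
  set d := ssD s ε with hd
  have hd1 : 1 ≤ d := ssD_pos s hs ε
  have hds : d ≤ s - 1 := ssD_le s hs ε hε
  have hE : (0:ℝ) < Real.exp ε := Real.exp_pos ε
  have hdR : (1:ℝ) ≤ (d:ℝ) := by exact_mod_cast hd1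
  have hsd : d ≤ s := le_trans hds (Nat.sub_le s 1)
  have hsdR : ((s - d : ℕ) : ℝ) = (s:ℝ) - (d:ℝ) := by
    push_cast [hsd]; ring
  have hsd1 : (1:ℝ) ≤ (s:ℝ) - (d:ℝ) := by
    have : d + 1 ≤ s := by omega
    have := Nat.cast_le (α := ℝ).mpr this
    push_cast at this; linarith
  have hA : (0:ℝ) < (d:ℝ) * Real.exp ε + (s:ℝ) - (d:ℝ) := by nlinarith
  have hC1 : (0:ℝ) < ((s - 1).choose (d - 1) : ℝ) := by
    exact_mod_cast Nat.choose_pos (by omega)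
  have hC2 : (0:ℝ) < ((s - 1).choose d : ℝ) := by
    exact_mod_cast Nat.choose_pos hds
  -- choose identity: d * C(s-1, d) = (s - d) * C(s-1, d-1)
  have hchoose : (d:ℝ) * ((s - 1).choose d : ℝ)
      = ((s:ℝ) - (d:ℝ)) * ((s - 1).choose (d - 1) : ℝ) := by
    have h := Nat.add_one_mul_choose_eq (s - 1) (d - 1)
    have h2 := Nat.choose_succ_right_eq (s - 1) (d - 1)
    have hdd : d - 1 + 1 = d := by omega
    rw [hdd] at h2
    -- h2 : (s-1).choose d * d = (s-1).choose (d-1) * (s - 1 - (d-1))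
    have h3 : s - 1 - (d - 1) = s - d := by omega
    rw [h3] at h2
    have := congrArg (fun n : ℕ => (n : ℝ)) h2
    push_cast at this
    rw [hsdR] at this
    linarith [this]
  have hp : ssp s ε = (d:ℝ) * Real.exp ε / ((d:ℝ) * Real.exp ε + (s:ℝ) - (d:ℝ)) := rfl
  have h1p : 1 - ssp s ε = ((s:ℝ) - (d:ℝ)) / ((d:ℝ) * Real.exp ε + (s:ℝ) - (d:ℝ)) := by
    rw [hp]; field_simp; ring
  rw [h1p, hp]
  field_simp
  linear_combination hchoose

/-- The Subset Selection mechanism is `ε`-locally differentially private: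
for every pair of inputs `z, z'` and every subset `S`, `P_z(S) ≤ e^ε · P_{z'}(S)`. -/
theorem subsetSelection_LDP (s : ℕ) (hs : 2 ≤ s) (ε : ℝ) (hε : 0 < ε)
    (z z' : Fin s) (S : Finset (Fin s)) :
    ssP s ε z S ≤ Real.exp ε * ssP s ε z' S := by
  unfold ssP
  by_cases hcard : S.card = ssD s ε
  · simp only [hcard, if_true]
    have hE1 : (1:ℝ) ≤ Real.exp ε := by
      have := Real.exp_pos ε
      nlinarith [Real.add_one_le_exp ε]
    have key := ssP_key s hs ε hε
    have hC1 : (0:ℝ) < ((s - 1).choose (ssD s ε - 1) : ℝ) := by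
      have := ssD_le s hs ε hε
      exact_mod_cast Nat.choose_pos (by omega)
    have hC2 : (0:ℝ) < ((s - 1).choose (ssD s ε) : ℝ) := by
      exact_mod_cast Nat.choose_pos (ssD_le s hs ε hε)
    have hpnn : 0 ≤ ssp s ε := by
      have hd1 : 1 ≤ ssD s ε := ssD_pos s hs ε
      have hds : ssD s ε ≤ s - 1 := ssD_le s hs ε hε
      have hdR : (1:ℝ) ≤ (ssD s ε : ℝ) := by exact_mod_cast hd1
      have hsd1 : (1:ℝ) ≤ (s:ℝ) - (ssD s ε : ℝ) := by
        have : ssD s ε + 1 ≤ s := by omega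
        have := Nat.cast_le (α := ℝ).mpr this
        push_cast at this; linarith
      have hE : (0:ℝ) < Real.exp ε := Real.exp_pos ε
      have hA : (0:ℝ) < (ssD s ε:ℝ) * Real.exp ε + (s:ℝ) - (ssD s ε:ℝ) := by nlinarith
      exact div_nonneg (by positivity) hA.le
    have h1pnn : 0 ≤ 1 - ssp s ε := by
      have hd1 : 1 ≤ ssD s ε := ssD_pos s hs ε
      have hds : ssD s ε ≤ s - 1 := ssD_le s hs ε hε
      have hdR : (1:ℝ) ≤ (ssD s ε : ℝ) := by exact_mod_cast hd1
      have hsd1 : (1:ℝ) ≤ (s:ℝ) - (ssD s ε : ℝ) := by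
        have : ssD s ε + 1 ≤ s := by omega
        have := Nat.cast_le (α := ℝ).mpr this
        push_cast at this; linarith
      have hE : (0:ℝ) < Real.exp ε := Real.exp_pos ε
      have hA : (0:ℝ) < (ssD s ε:ℝ) * Real.exp ε + (s:ℝ) - (ssD s ε:ℝ) := by nlinarith
      unfold ssp
      rw [sub_nonneg, div_le_one hA]
      nlinarith
    by_cases h1 : z ∈ S <;> by_cases h2 : z' ∈ S <;> simp only [h1, h2, if_true, if_false]
    · nlinarith [div_nonneg hpnn hC1.le]
    · exact le_of_eq key
    · rw [key]
      have h0 : 0 ≤ (1 - ssp s ε) / ((s - 1).choose (ssD s ε) : ℝ) :=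
        div_nonneg h1pnn hC2.le
      nlinarith [mul_le_mul hE1 hE1 (by norm_num : (0:ℝ) ≤ 1) (by positivity), h0]
    · nlinarith [div_nonneg h1pnn hC2.le]
  · simp [hcard]
end

section
/- Fix s ≥ 2, ε > 0, d = ⌈s/(e^ε+1)⌉ with d ≥ 2, and p = d·e^ε/(d·e^ε + s − d). Generate a random subset S of {1,…,s} as follows: independently, include the element 1 with probability p, and draw B a uniformly random (d−2)-element subset of {2,…,s}; let S' be the union of B and (if included) {1}; then, conditionally, draw a uniformly random (d − |S'|)-element subset F of {2,…,s} \ S' and set S = S' ∪ F. Then S is distributed exactly as the output SS(1) of the Subset Selection mechanism with input z = 1. -/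
open scoped ENNReal

/-- The uniform distribution over all `k`-element subsets of the finite set `T`
(junk value: the point mass at `∅` when there is no `k`-element subset of `T`). -/
noncomputable def uniformPowersetCard {α : Type*} (T : Finset α) (k : ℕ) : PMF (Finset α) :=
  if h : (T.powersetCard k).Nonempty then PMF.uniformOfFinset _ h else PMF.pure ∅

/-- A Bernoulli random Boolean which is `true` with probability `p ∈ [0, 1]`
(junk value: the point mass at `true` when `p > 1`). -/
noncomputable def bernoulliPMF (p : ℝ) : PMF Bool :=
  if h : ENNReal.ofReal p ≤ 1 then PMF.bernoulli p.toNNReal (ENNReal.coe_le_one_iff.mp h) else PMF.pure true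

lemma uniformPowersetCard_apply {α : Type*} [DecidableEq α] (T : Finset α) (k : ℕ)
    (hk : k ≤ T.card) (B : Finset α) :
    uniformPowersetCard T k B =
      if B ∈ T.powersetCard k then ((T.card.choose k : ℝ≥0∞))⁻¹ else 0 := by
  rw [uniformPowersetCard, dif_pos (Finset.powersetCard_nonempty.mpr hk),
    PMF.uniformOfFinset_apply, Finset.card_powersetCard]
  split_ifs <;> rfl

lemma map_uniformPowersetCard_union {α : Type*} [DecidableEq α]
    (A T : Finset α) (k : ℕ) (hk : k ≤ T.card) (hAT : Disjoint A T) (S : Finset α) :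
    ((uniformPowersetCard T k).map fun F => A ∪ F) S =
      if A ⊆ S ∧ S \ A ⊆ T ∧ (S \ A).card = k then ((T.card.choose k : ℝ≥0∞))⁻¹ else 0 := by
  have hne : (T.powersetCard k).Nonempty := Finset.powersetCard_nonempty.mpr hk
  rw [uniformPowersetCard, dif_pos hne, PMF.map_apply]
  rw [tsum_eq_single (S \ A) ?_]
  · rw [PMF.uniformOfFinset_apply]
    by_cases h : A ⊆ S ∧ S \ A ⊆ T ∧ (S \ A).card = k
    · rw [if_pos ((Finset.union_sdiff_of_subset h.1).symm),
        if_pos (Finset.mem_powersetCard.mpr ⟨h.2.1, h.2.2⟩),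
        Finset.card_powersetCard, if_pos h]
    · rw [if_neg h]
      by_cases h1 : S = A ∪ S \ A
      · rw [if_pos h1, if_neg]
        intro hmem
        obtain ⟨hsub, hcard⟩ := Finset.mem_powersetCard.mp hmem
        exact h ⟨by rw [h1]; exact Finset.subset_union_left, hsub, hcard⟩
      · rw [if_neg h1]
  · intro F hF
    rw [PMF.uniformOfFinset_apply]
    by_cases h1 : S = A ∪ F
    · rw [if_pos h1, if_neg]
      intro hmem
      obtain ⟨hFT, -⟩ := Finset.mem_powersetCard.mp hmem
      exact hF (by rw [h1, Finset.union_sdiff_cancel_left (hAT.mono_right hFT)])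
    · rw [if_neg h1]

lemma branchTrue (s d : ℕ) (hd2 : 2 ≤ d) (hds : d + 1 ≤ s) (x1 : Fin s) (S : Finset (Fin s)) :
    ((uniformPowersetCard ({x1}ᶜ : Finset (Fin s)) (d - 2)).bind fun B =>
      (uniformPowersetCard (({x1}ᶜ : Finset (Fin s)) \ insert x1 B) (d - (insert x1 B).card)).map
        fun F => insert x1 B ∪ F) S
    = if x1 ∈ S ∧ S.card = d then
        ((d - 1 : ℕ) : ℝ≥0∞) * (((s-1).choose (d-2) : ℕ) : ℝ≥0∞)⁻¹ * (((s-d+1 : ℕ)) : ℝ≥0∞)⁻¹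
      else 0 := by
  classical
  have hcompl : ({x1}ᶜ : Finset (Fin s)).card = s - 1 := by
    simp [Finset.card_compl]
  have hk1 : d - 2 ≤ ({x1}ᶜ : Finset (Fin s)).card := by omega
  rw [PMF.bind_apply, tsum_fintype]
  have step : ∀ B : Finset (Fin s),
      uniformPowersetCard ({x1}ᶜ : Finset (Fin s)) (d - 2) B *
        ((uniformPowersetCard (({x1}ᶜ : Finset (Fin s)) \ insert x1 B)
            (d - (insert x1 B).card)).map (fun F => insert x1 B ∪ F)) S
      = if B ∈ Finset.powersetCard (d-2) (S.erase x1) ∧ x1 ∈ S ∧ S.card = d then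
          (((s-1).choose (d-2) : ℕ) : ℝ≥0∞)⁻¹ * (((s-d+1 : ℕ)) : ℝ≥0∞)⁻¹ else 0 := by
    intro B
    rw [uniformPowersetCard_apply _ _ hk1]
    by_cases hB : B ∈ Finset.powersetCard (d-2) ({x1}ᶜ : Finset (Fin s))
    · obtain ⟨hBsub, hBcard⟩ := Finset.mem_powersetCard.mp hB
      have hx1B : x1 ∉ B := fun h => by simpa using hBsub h
      have hcardA : (insert x1 B).card = d - 1 := by
        rw [Finset.card_insert_of_notMem hx1B, hBcard]; omega
      have hTset : ({x1}ᶜ : Finset (Fin s)) \ insert x1 B = ({x1}ᶜ : Finset (Fin s)) \ B := by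
        ext y; simp only [Finset.mem_sdiff, Finset.mem_compl, Finset.mem_singleton,
          Finset.mem_insert]
        tauto
      have hTcard : (({x1}ᶜ : Finset (Fin s)) \ insert x1 B).card = s - d + 1 := by
        rw [hTset, Finset.card_sdiff_of_subset hBsub, hcompl, hBcard]; omega
      have hkk : d - (insert x1 B).card = 1 := by rw [hcardA]; omega
      rw [map_uniformPowersetCard_union _ _ _ (by rw [hTcard, hkk]; omega)
        Finset.disjoint_sdiff, if_pos hB, hTcard, hkk, Nat.choose_one_right]
      by_cases hcond : insert x1 B ⊆ S ∧
          S \ insert x1 B ⊆ ({x1}ᶜ : Finset (Fin s)) \ insert x1 B ∧ (S \ insert x1 B).card = 1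
      · obtain ⟨h1, h2, h3⟩ := hcond
        have hx1S : x1 ∈ S := h1 (Finset.mem_insert_self x1 B)
        have hSc : S.card = d := by
          have := Finset.card_sdiff_of_subset h1
          have := Finset.card_le_card h1
          omega
        have hBe : B ⊆ S.erase x1 := by
          intro y hy
          exact Finset.mem_erase.mpr ⟨fun h => hx1B (h ▸ hy), h1 (Finset.mem_insert_of_mem hy)⟩
        rw [if_pos ⟨h1, h2, h3⟩,
          if_pos ⟨Finset.mem_powersetCard.mpr ⟨hBe, hBcard⟩, hx1S, hSc⟩, hcompl]
      · rw [if_neg hcond, if_neg, mul_zero]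
        rintro ⟨hBm, hx1S, hSc⟩
        obtain ⟨hBsub', -⟩ := Finset.mem_powersetCard.mp hBm
        have h1 : insert x1 B ⊆ S :=
          Finset.insert_subset hx1S (hBsub'.trans (Finset.erase_subset _ _))
        refine hcond ⟨h1, ?_, ?_⟩
        · intro y hy
          obtain ⟨hyS, hyA⟩ := Finset.mem_sdiff.mp hy
          refine Finset.mem_sdiff.mpr ⟨?_, hyA⟩
          simp only [Finset.mem_compl, Finset.mem_singleton]
          intro h
          exact hyA (h ▸ Finset.mem_insert_self x1 B)
        · rw [Finset.card_sdiff_of_subset h1, hcardA, hSc]; omega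
    · rw [if_neg hB, zero_mul, if_neg]
      rintro ⟨hBm, hx1S, -⟩
      obtain ⟨hBsub', hBcard'⟩ := Finset.mem_powersetCard.mp hBm
      refine hB (Finset.mem_powersetCard.mpr ⟨?_, hBcard'⟩)
      intro y hy
      simp only [Finset.mem_compl, Finset.mem_singleton]
      exact (Finset.mem_erase.mp (hBsub' hy)).1
  rw [Finset.sum_congr rfl fun B _ => step B]
  by_cases hS : x1 ∈ S ∧ S.card = d
  · rw [if_pos hS]
    have herase : (S.erase x1).card = d - 1 := by
      rw [Finset.card_erase_of_mem hS.1, hS.2]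
    simp only [hS, and_true]
    rw [Finset.sum_ite_mem, Finset.univ_inter, Finset.sum_const,
      Finset.card_powersetCard, herase, nsmul_eq_mul, ← mul_assoc]
    congr 2
    have : d - 1 = (d - 2) + 1 := by omega
    rw [this, Nat.choose_succ_self_right]
  · rw [if_neg hS]
    have : ∀ B : Finset (Fin s), B ∈ Finset.univ →
        (if B ∈ Finset.powersetCard (d-2) (S.erase x1) ∧ x1 ∈ S ∧ S.card = d then
          (((s-1).choose (d-2) : ℕ) : ℝ≥0∞)⁻¹ * (((s-d+1 : ℕ)) : ℝ≥0∞)⁻¹ else 0) = 0 := by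
      intro B _
      rw [if_neg]
      rintro ⟨-, h⟩
      exact hS h
    rw [Finset.sum_congr rfl this, Finset.sum_const, smul_zero]

lemma branchFalse (s d : ℕ) (hd2 : 2 ≤ d) (hds : d + 1 ≤ s) (x1 : Fin s) (S : Finset (Fin s)) :
    ((uniformPowersetCard ({x1}ᶜ : Finset (Fin s)) (d - 2)).bind fun B =>
      (uniformPowersetCard (({x1}ᶜ : Finset (Fin s)) \ B) (d - B.card)).map
        fun F => B ∪ F) S
    = if x1 ∉ S ∧ S.card = d then
        ((d.choose (d-2) : ℕ) : ℝ≥0∞) * (((s-1).choose (d-2) : ℕ) : ℝ≥0∞)⁻¹ *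
          ((((s-d+1).choose 2 : ℕ)) : ℝ≥0∞)⁻¹
      else 0 := by
  classical
  have hcompl : ({x1}ᶜ : Finset (Fin s)).card = s - 1 := by
    simp [Finset.card_compl]
  have hk1 : d - 2 ≤ ({x1}ᶜ : Finset (Fin s)).card := by omega
  rw [PMF.bind_apply, tsum_fintype]
  have step : ∀ B : Finset (Fin s),
      uniformPowersetCard ({x1}ᶜ : Finset (Fin s)) (d - 2) B *
        ((uniformPowersetCard (({x1}ᶜ : Finset (Fin s)) \ B)
            (d - B.card)).map (fun F => B ∪ F)) S
      = if B ∈ Finset.powersetCard (d-2) S ∧ x1 ∉ S ∧ S.card = d then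
          (((s-1).choose (d-2) : ℕ) : ℝ≥0∞)⁻¹ * ((((s-d+1).choose 2 : ℕ)) : ℝ≥0∞)⁻¹ else 0 := by
    intro B
    rw [uniformPowersetCard_apply _ _ hk1]
    by_cases hB : B ∈ Finset.powersetCard (d-2) ({x1}ᶜ : Finset (Fin s))
    · obtain ⟨hBsub, hBcard⟩ := Finset.mem_powersetCard.mp hB
      have hx1B : x1 ∉ B := fun h => by simpa using hBsub h
      have hTcard : (({x1}ᶜ : Finset (Fin s)) \ B).card = s - d + 1 := by
        rw [Finset.card_sdiff_of_subset hBsub, hcompl, hBcard]; omega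
      have hkk : d - B.card = 2 := by rw [hBcard]; omega
      rw [map_uniformPowersetCard_union _ _ _ (by rw [hTcard, hkk]; omega)
        Finset.disjoint_sdiff, if_pos hB, hTcard, hkk]
      by_cases hcond : B ⊆ S ∧
          S \ B ⊆ ({x1}ᶜ : Finset (Fin s)) \ B ∧ (S \ B).card = 2
      · obtain ⟨h1, h2, h3⟩ := hcond
        have hx1S : x1 ∉ S := by
          intro hx
          have : x1 ∈ S \ B := Finset.mem_sdiff.mpr ⟨hx, hx1B⟩
          simpa using (Finset.mem_sdiff.mp (h2 this)).1
        have hSc : S.card = d := by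
          have := Finset.card_sdiff_of_subset h1
          have := Finset.card_le_card h1
          omega
        rw [if_pos ⟨h1, h2, h3⟩,
          if_pos ⟨Finset.mem_powersetCard.mpr ⟨h1, hBcard⟩, hx1S, hSc⟩, hcompl]
      · rw [if_neg hcond, if_neg, mul_zero]
        rintro ⟨hBm, hx1S, hSc⟩
        obtain ⟨hBsub', -⟩ := Finset.mem_powersetCard.mp hBm
        refine hcond ⟨hBsub', ?_, ?_⟩
        · intro y hy
          obtain ⟨hyS, hyB⟩ := Finset.mem_sdiff.mp hy
          refine Finset.mem_sdiff.mpr ⟨?_, hyB⟩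
          simp only [Finset.mem_compl, Finset.mem_singleton]
          intro h
          exact hx1S (h ▸ hyS)
        · rw [Finset.card_sdiff_of_subset hBsub', hSc, hBcard]; omega
    · rw [if_neg hB, zero_mul, if_neg]
      rintro ⟨hBm, hx1S, -⟩
      obtain ⟨hBsub', hBcard'⟩ := Finset.mem_powersetCard.mp hBm
      refine hB (Finset.mem_powersetCard.mpr ⟨?_, hBcard'⟩)
      intro y hy
      simp only [Finset.mem_compl, Finset.mem_singleton]
      intro h
      exact hx1S (h ▸ hBsub' hy)
  rw [Finset.sum_congr rfl fun B _ => step B]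
  by_cases hS : x1 ∉ S ∧ S.card = d
  · rw [if_pos hS]
    simp only [hS.1, hS.2, not_false_eq_true, and_true]
    rw [Finset.sum_ite_mem, Finset.univ_inter, Finset.sum_const,
      Finset.card_powersetCard, hS.2, nsmul_eq_mul, ← mul_assoc]
  · rw [if_neg hS]
    have : ∀ B : Finset (Fin s), B ∈ Finset.univ →
        (if B ∈ Finset.powersetCard (d-2) S ∧ x1 ∉ S ∧ S.card = d then
          (((s-1).choose (d-2) : ℕ) : ℝ≥0∞)⁻¹ * ((((s-d+1).choose 2 : ℕ)) : ℝ≥0∞)⁻¹ else 0) = 0 := by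
      intro B _
      rw [if_neg]
      rintro ⟨-, h⟩
      exact hS h
    rw [Finset.sum_congr rfl this, Finset.sum_const, smul_zero]

lemma enn_aux (m n k : ℕ) (hn : n ≠ 0) (h : k * m = n) :
    (m : ℝ≥0∞) * ((n : ℕ) : ℝ≥0∞)⁻¹ = ((k : ℕ) : ℝ≥0∞)⁻¹ := by
  subst h
  have hm : m ≠ 0 := by rintro rfl; simp at hn
  have hk : k ≠ 0 := by rintro rfl; simp at hn
  rw [Nat.cast_mul,
    ENNReal.mul_inv (Or.inl (by exact_mod_cast hk)) (Or.inl (ENNReal.natCast_ne_top k)),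
    mul_comm ((k : ℝ≥0∞))⁻¹ _, ← mul_assoc,
    ENNReal.mul_inv_cancel (by exact_mod_cast hm) (ENNReal.natCast_ne_top m), one_mul]

/-- generate a random subset `S` of `{1, …, s}` as follows: independently, include
the element `1` with probability `p` and draw `B` a uniformly random `(d − 2)`-element subset of
`{2, …, s}`; let `S'` be the union of `B` and (if included) `{1}`; then, conditionally, draw a
uniformly random `(d − |S'|)`-element subset `F` of `{2, …, s} \ S'` and set `S = S' ∪ F`.
Then `S` is distributed exactly as the output `SS(1)` of the Subset Selection mechanism with
input `z = 1`. Here `{1, …, s}` is identified with `Fin s`, `x1 : Fin s` plays the role of the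
element `1`, and `{2, …, s}` is its complement `{x1}ᶜ`. -/
theorem coupled_construction_distributed_as_subsetSelection
    (s : ℕ) (hs : 2 ≤ s) (ε : ℝ) (hε : 0 < ε) (hd2 : 2 ≤ ssD s ε) (x1 : Fin s) :
    ∀ S : Finset (Fin s),
      ((bernoulliPMF (ssp s ε)).bind fun inc =>
        (uniformPowersetCard ({x1}ᶜ : Finset (Fin s)) (ssD s ε - 2)).bind fun B =>
          (uniformPowersetCard
              (({x1}ᶜ : Finset (Fin s)) \ (if inc then insert x1 B else B))
              (ssD s ε - (if inc then insert x1 B else B).card)).map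
            fun F => (if inc then insert x1 B else B) ∪ F) S
        = ENNReal.ofReal (ssP s ε x1 S) := by
  intro S
  have hE : (1 : ℝ) < Real.exp ε := by
    have := Real.exp_lt_exp.mpr hε
    rwa [Real.exp_zero] at this
  -- d + 1 ≤ s
  have hds : ssD s ε + 1 ≤ s := by
    have h2 : ssD s ε ≤ s - 1 := by
      rw [ssD]
      apply Nat.ceil_le.mpr
      have hcast : ((s - 1 : ℕ) : ℝ) = (s : ℝ) - 1 := by
        push_cast [Nat.cast_sub (by omega : 1 ≤ s)]; ring
      rw [hcast]
      have hs2 : (2 : ℝ) ≤ (s : ℝ) := by exact_mod_cast hs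
      have step1 : (s : ℝ) / (Real.exp ε + 1) ≤ (s : ℝ) / 2 := by
        apply div_le_div_of_nonneg_left (by linarith) (by norm_num)
        linarith
      linarith
    omega
  set d := ssD s ε with hdDef
  have hD2 : (2 : ℝ) ≤ (d : ℝ) := by exact_mod_cast hd2
  have hDs : (d : ℝ) + 1 ≤ (s : ℝ) := by exact_mod_cast hds
  have hden : 0 < (d : ℝ) * Real.exp ε + (s : ℝ) - (d : ℝ) := by nlinarith
  have hp0 : 0 < ssp s ε := by
    rw [ssp, ← hdDef]
    exact div_pos (by nlinarith) hden
  have hp1 : ssp s ε < 1 := by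
    rw [ssp, ← hdDef]
    rw [div_lt_one hden]
    linarith
  have hq1 : ENNReal.ofReal (ssp s ε) ≤ 1 := ENNReal.ofReal_le_one.mpr hp1.le
  rw [bernoulliPMF, dif_pos hq1, PMF.bind_apply, tsum_bool]
  simp only [PMF.bernoulli_apply, Bool.cond_false, Bool.cond_true, Bool.false_eq_true,
    if_false, if_true]
  rw [branchTrue s d hd2 hds x1 S, branchFalse s d hd2 hds x1 S]
  -- nonzero choose facts
  have hC1 : (s-1).choose (d-2) ≠ 0 := (Nat.choose_pos (by omega)).ne'
  have hC3 : 0 < (s-1).choose (d-1) := Nat.choose_pos (by omega)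
  have hC4 : 0 < (s-1).choose d := Nat.choose_pos (by omega)
  have hC2 : 0 < (s-d+1).choose 2 := Nat.choose_pos (by omega)
  by_cases hcard : S.card = d
  · by_cases hx1 : x1 ∈ S
    · rw [if_neg (show ¬(x1 ∉ S ∧ S.card = d) from fun h => h.1 hx1), mul_zero, zero_add,
        if_pos (show x1 ∈ S ∧ S.card = d from ⟨hx1, hcard⟩)]
      rw [ssP, ← hdDef, if_pos hcard, if_pos hx1,
        ENNReal.ofReal_div_of_pos (by exact_mod_cast hC3), ENNReal.ofReal_natCast,
        div_eq_mul_inv]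
      congr 1
      have key1 : (s-1).choose (d-1) * (d-1) = (s-1).choose (d-2) * (s-d+1) := by
        have h := Nat.choose_succ_right_eq (s-1) (d-2)
        have e1 : d - 2 + 1 = d - 1 := by omega
        have e2 : s - 1 - (d - 2) = s - d + 1 := by omega
        rw [e1, e2] at h
        exact h
      rw [mul_assoc, ← ENNReal.mul_inv (Or.inl (by exact_mod_cast hC1))
        (Or.inl (ENNReal.natCast_ne_top _)), ← Nat.cast_mul]
      exact enn_aux _ _ _ (by positivity) key1
    · rw [if_neg (show ¬(x1 ∈ S ∧ S.card = d) from fun h => hx1 h.1), mul_zero, add_zero,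
        if_pos (show x1 ∉ S ∧ S.card = d from ⟨hx1, hcard⟩)]
      rw [ssP, ← hdDef, if_pos hcard, if_neg hx1,
        ENNReal.ofReal_div_of_pos (by exact_mod_cast hC4),
        ENNReal.ofReal_sub _ hp0.le, ENNReal.ofReal_one, ENNReal.ofReal_natCast,
        div_eq_mul_inv]
      congr 1
      have key2 : (s-1).choose d * (d.choose (d-2)) =
          (s-1).choose (d-2) * ((s-d+1).choose 2) := by
        have h1 : (s-1).choose (d-1) * (d-1) = (s-1).choose (d-2) * (s-d+1) := by
          have h := Nat.choose_succ_right_eq (s-1) (d-2)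
          have e1 : d - 2 + 1 = d - 1 := by omega
          have e2 : s - 1 - (d - 2) = s - d + 1 := by omega
          rw [e1, e2] at h; exact h
        have h2 : (s-1).choose d * d = (s-1).choose (d-1) * (s-d) := by
          have h := Nat.choose_succ_right_eq (s-1) (d-1)
          have e1 : d - 1 + 1 = d := by omega
          have e2 : s - 1 - (d - 1) = s - d := by omega
          rw [e1, e2] at h; exact h
        have h3 : d.choose (d-2) = d.choose 2 := by
          have := Nat.choose_symm (by omega : 2 ≤ d)
          simpa using this
        have h4 : d.choose 2 * 2 = d * (d-1) := by
          have h := Nat.choose_succ_right_eq d 1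
          rw [Nat.choose_one_right] at h
          simpa using h
        have h5 : (s-d+1).choose 2 * 2 = (s-d+1) * (s-d) := by
          have h := Nat.choose_succ_right_eq (s-d+1) 1
          rw [Nat.choose_one_right] at h
          have e : s - d + 1 - 1 = s - d := by omega
          rw [e] at h
          simpa using h
        have main : ((s-1).choose d * (d.choose (d-2))) * 2 =
            ((s-1).choose (d-2) * ((s-d+1).choose 2)) * 2 := by
          calc ((s-1).choose d * (d.choose (d-2))) * 2
              = (s-1).choose d * (d.choose 2 * 2) := by rw [h3]; ring
            _ = (s-1).choose d * (d * (d-1)) := by rw [h4]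
            _ = ((s-1).choose d * d) * (d-1) := by ring
            _ = ((s-1).choose (d-1) * (s-d)) * (d-1) := by rw [h2]
            _ = ((s-1).choose (d-1) * (d-1)) * (s-d) := by ring
            _ = ((s-1).choose (d-2) * (s-d+1)) * (s-d) := by rw [h1]
            _ = (s-1).choose (d-2) * ((s-d+1) * (s-d)) := by ring
            _ = (s-1).choose (d-2) * ((s-d+1).choose 2 * 2) := by rw [h5]
            _ = ((s-1).choose (d-2) * ((s-d+1).choose 2)) * 2 := by ring
        omega
      rw [mul_assoc, ← ENNReal.mul_inv (Or.inl (by exact_mod_cast hC1))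
        (Or.inl (ENNReal.natCast_ne_top _)), ← Nat.cast_mul]
      exact enn_aux _ _ _ (by positivity) key2
  · rw [if_neg (show ¬(x1 ∉ S ∧ S.card = d) from fun h => hcard h.2),
      if_neg (show ¬(x1 ∈ S ∧ S.card = d) from fun h => hcard h.2), mul_zero, mul_zero,
      add_zero, ssP, ← hdDef, if_neg hcard, ENNReal.ofReal_zero]
end
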